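/- Hypergraph immersion is transitive: if there exists an immersion of H in G and an immersion of G in F, then there exists an immersion of H in F. -/

import Mathlib

/-- A hypergraph with vertex type `V` and hyperedge index type `E` (possibly infinite):
each hyperedge index is assigned its finite set of incident vertices. Multi-hyperedges are
allowed (distinct indices with the same incidence set). -/
structure Hypergraph' (V : Type) (E : Type) where
  inc : E → Finset V

namespace Hypergraph'

/-- The vertex set spanned by a set `S` of hyperedges of `G`. -/
def vertsOf {V E : Type} (G : Hypergraph' V E) (S : Finset E) : Set V :=
  {v | ∃ f ∈ S, v ∈ G.inc f}

/-- The sub-hypergraph of `G` given by the hyperedge set `S` is connected: any two of its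
vertices are joined by a Berge path within `S`. -/
def ConnectedOn {V E : Type} (G : Hypergraph' V E) (S : Finset E) : Prop :=
  ∀ u ∈ G.vertsOf S, ∀ v ∈ G.vertsOf S,
    Relation.ReflTransGen (fun a b => ∃ f ∈ S, a ∈ G.inc f ∧ b ∈ G.inc f) u v

end Hypergraph'

/-- An immersion of hypergraph `H` in hypergraph `G`: vertices map injectively to vertices,
and each hyperedge of `H` maps to a nonempty connected sub-hypergraph of `G` containing the
images of its ends, with distinct hyperedges mapped to edge-disjoint sub-hypergraphs. -/
structure Immersion {V1 E1 V2 E2 : Type}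
    (H : Hypergraph' V1 E1) (G : Hypergraph' V2 E2) where
  vmap : V1 → V2
  emap : E1 → Finset E2
  vinj : Function.Injective vmap
  nonempty : ∀ e, (emap e).Nonempty
  covers : ∀ e, ∀ v ∈ H.inc e, vmap v ∈ G.vertsOf (emap e)
  conn : ∀ e, G.ConnectedOn (emap e)
  disj : ∀ e1 e2, e1 ≠ e2 → Disjoint (emap e1) (emap e2)

/-- An embedding (topological-minor realization) of `H` in `G`: like an immersion, but the
images of distinct hyperedges may share vertices only at images of shared endpoints
(rule (iii) of immersion replaced by `V(β(e1) ∩ β(e2)) = β(V(e1 ∩ e2))`). -/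
structure GraphEmbedding {V1 E1 V2 E2 : Type}
    (H : Hypergraph' V1 E1) (G : Hypergraph' V2 E2) where
  vmap : V1 → V2
  emap : E1 → Finset E2
  vinj : Function.Injective vmap
  nonempty : ∀ e, (emap e).Nonempty
  covers : ∀ e, ∀ v ∈ H.inc e, vmap v ∈ G.vertsOf (emap e)
  conn : ∀ e, G.ConnectedOn (emap e)
  vdisj : ∀ e1 e2, e1 ≠ e2 → ∀ x,
    (x ∈ G.vertsOf (emap e1) ∧ x ∈ G.vertsOf (emap e2)) ↔
      (∃ v, x = vmap v ∧ v ∈ H.inc e1 ∧ v ∈ H.inc e2)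

/-- Hypergraph immersion is transitive: if `H` immerses in `G` and `G`
immerses in `F`, then `H` immerses in `F`. -/
theorem stmt3 {V1 E1 V2 E2 V3 E3 : Type}
    (H : Hypergraph' V1 E1) (G : Hypergraph' V2 E2) (F : Hypergraph' V3 E3)
    (h1 : Nonempty (Immersion H G)) (h2 : Nonempty (Immersion G F)) :
    Nonempty (Immersion H F) := by
  classical
  obtain ⟨α⟩ := h1
  obtain ⟨β⟩ := h2
  choose pick hpick using α.nonempty
  -- keep only the hyperedges of G with nonempty incidence set
  set S : E1 → Finset E2 := fun e => (α.emap e).filter (fun f => (G.inc f).Nonempty) with hS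
  set em : E1 → Finset E3 :=
    fun e => if (S e).Nonempty then (S e).biUnion β.emap else β.emap (pick e) with hem
  have hSub : ∀ e, em e ⊆ (α.emap e).biUnion β.emap := by
    intro e x hx
    simp only [hem] at hx
    split_ifs at hx with h
    · rcases Finset.mem_biUnion.1 hx with ⟨f, hf, hxf⟩
      exact Finset.mem_biUnion.2 ⟨f, Finset.mem_filter.1 hf |>.1, hxf⟩
    · exact Finset.mem_biUnion.2 ⟨pick e, hpick e, hx⟩
  refine ⟨⟨β.vmap ∘ α.vmap, em, β.vinj.comp α.vinj, ?_, ?_, ?_, ?_⟩⟩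
  · -- nonempty
    intro e
    simp only [hem]
    split_ifs with h
    · obtain ⟨f, hf⟩ := h
      obtain ⟨x, hx⟩ := β.nonempty f
      exact ⟨x, Finset.mem_biUnion.2 ⟨f, hf, hx⟩⟩
    · exact β.nonempty (pick e)
  · -- covers
    intro e v hv
    obtain ⟨f, hf, hvf⟩ := α.covers e v hv
    have hfS : f ∈ S e := Finset.mem_filter.2 ⟨hf, ⟨_, hvf⟩⟩
    obtain ⟨g, hg, hvg⟩ := β.covers f (α.vmap v) hvf
    have : em e = (S e).biUnion β.emap := by
      simp only [hem]; exact if_pos ⟨f, hfS⟩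
    rw [this]
    exact ⟨g, Finset.mem_biUnion.2 ⟨f, hfS, hg⟩, hvg⟩
  · -- conn
    intro e
    simp only [hem]
    split_ifs with h
    · set T := (S e).biUnion β.emap with hT
      set R : V3 → V3 → Prop := fun a b => ∃ g ∈ T, a ∈ F.inc g ∧ b ∈ F.inc g with hR
      -- within one image of a G-edge
      have A : ∀ f ∈ S e, ∀ a ∈ F.vertsOf (β.emap f), ∀ b ∈ F.vertsOf (β.emap f),
          Relation.ReflTransGen R a b := by
        intro f hf a ha b hb
        refine Relation.ReflTransGen.mono ?_ a b (β.conn f a ha b hb)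
        rintro x y ⟨g, hg, hxg, hyg⟩
        exact ⟨g, Finset.mem_biUnion.2 ⟨f, hf, hg⟩, hxg, hyg⟩
      -- transporting G-paths
      have B : ∀ w w',
          Relation.ReflTransGen (fun a b => ∃ f ∈ α.emap e, a ∈ G.inc f ∧ b ∈ G.inc f) w w' →
          Relation.ReflTransGen R (β.vmap w) (β.vmap w') := by
        intro w w' hww
        induction hww with
        | refl => exact Relation.ReflTransGen.refl
        | tail _ hstep ih =>
          rcases hstep with ⟨f, hf, haf, hbf⟩
          have hfS : f ∈ S e := Finset.mem_filter.2 ⟨hf, ⟨_, haf⟩⟩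
          exact ih.trans (A f hfS _ (β.covers f _ haf) _ (β.covers f _ hbf))
      intro u hu v hv
      obtain ⟨gu, hgu, hugu⟩ := hu
      obtain ⟨gv, hgv, hvgv⟩ := hv
      obtain ⟨fu, hfu, hgufu⟩ := Finset.mem_biUnion.1 hgu
      obtain ⟨fv, hfv, hgvfv⟩ := Finset.mem_biUnion.1 hgv
      obtain ⟨wu, hwu⟩ := (Finset.mem_filter.1 hfu).2
      obtain ⟨wv, hwv⟩ := (Finset.mem_filter.1 hfv).2
      have h1 : Relation.ReflTransGen R u (β.vmap wu) :=
        A fu hfu u ⟨gu, hgufu, hugu⟩ _ (β.covers fu wu hwu)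
      have h3 : Relation.ReflTransGen R (β.vmap wv) v :=
        A fv hfv _ (β.covers fv wv hwv) v ⟨gv, hgvfv, hvgv⟩
      have h2 : Relation.ReflTransGen R (β.vmap wu) (β.vmap wv) :=
        B wu wv (α.conn e wu ⟨fu, (Finset.mem_filter.1 hfu).1, hwu⟩
          wv ⟨fv, (Finset.mem_filter.1 hfv).1, hwv⟩)
      exact (h1.trans h2).trans h3
    · exact β.conn (pick e)
  · -- disj
    intro e1 e2 hne
    rw [Finset.disjoint_left]
    intro x hx1 hx2
    obtain ⟨f1, hf1, hxf1⟩ := Finset.mem_biUnion.1 (hSub e1 hx1)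
    obtain ⟨f2, hf2, hxf2⟩ := Finset.mem_biUnion.1 (hSub e2 hx2)
    have hf12 : f1 ≠ f2 := by
      rintro rfl
      exact Finset.disjoint_left.1 (α.disj e1 e2 hne) hf1 hf2
    exact Finset.disjoint_left.1 (β.disj f1 f2 hf12) hxf1 hxf2
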